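/- arXiv:2508.01809 — 3 statements merged into one kernel-verified Lean document; each statement's English description precedes it below -/
import Mathlib

section
/- Let N ≥ 2, 0 < r < R, a ∈ [−1, −(r/R)^{N−1}). For s ∈ [r, R], the function ρ(s) = (aR^{N−1}+r^{N−1})s/(R^N−r^N) − r^{N−1}R^{N−1}(ar+R) s^{1−N}/(R^N−r^N) satisfies ρ(s) ≥ −1; equivalently, the polynomial p₁(s) = (aR^{N−1}+r^{N−1})s^N + (R^N−r^N)s^{N−1} − r^{N−1}R^{N−1}(ar+R) is nonnegative on [r, R]. -/
/-- ρ(s) = (aR^{N-1}+r^{N-1})/(R^N-r^N) · s - r^{N-1}R^{N-1}(ar+R)/(R^N-r^N) · s^{1-N}. -/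
noncomputable def rho5 (N : ℕ) (r R a : ℝ) (s : ℝ) : ℝ :=
  (a*R^(N-1) + r^(N-1))/(R^N - r^N) * s -
    (r^(N-1) * R^(N-1) * (a*r + R))/(R^N - r^N) * s ^ (1 - (N:ℤ))

/-- for N ≥ 2, 0 < r < R, a ∈ [-1, -(r/R)^{N-1}), ρ(s) ≥ -1 on [r,R];
equivalently p₁(s) = (aR^{N-1}+r^{N-1})s^N + (R^N-r^N)s^{N-1} - r^{N-1}R^{N-1}(ar+R)
is nonnegative on [r,R]. -/
theorem stmt7 (N : ℕ) (hN : 2 ≤ N) (r R a : ℝ) (hr : 0 < r) (hrR : r < R)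
    (ha : -1 ≤ a) (ha' : a < -(r/R)^(N-1)) :
    ∀ s ∈ Set.Icc r R,
      -1 ≤ rho5 N r R a s ∧
      0 ≤ (a*R^(N-1) + r^(N-1))*s^N + (R^N - r^N)*s^(N-1) - r^(N-1)*R^(N-1)*(a*r + R) := by
  have hR : (0:ℝ) < R := hr.trans hrR
  set c := a*R^(N-1) + r^(N-1) with hc
  set b := R^N - r^N with hb
  set K := r^(N-1) * R^(N-1) * (a*r + R) with hK
  have hb0 : 0 < b := by
    have := pow_lt_pow_left₀ hrR hr.le (by omega : N ≠ 0)
    simpa [hb] using sub_pos.mpr this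
  have harR : 0 < a*r + R := by nlinarith
  have hK0 : 0 < K := by positivity
  set g : ℝ → ℝ := fun s => c*s + b + (-(K • s ^ (1 - (N:ℤ)))) with hg
  have hsub : Set.Icc r R ⊆ Set.Ioi (0:ℝ) := fun x hx => lt_of_lt_of_le hr hx.1
  have hconc : ConcaveOn ℝ (Set.Icc r R) g := by
    apply ConcaveOn.add
    · exact ⟨convex_Icc r R, fun x _ y _ p q hp hq hpq => by
        simp only [smul_eq_mul]; nlinarith⟩
    · exact (((convexOn_zpow (1 - (N:ℤ))).subset hsub (convex_Icc r R)).smul hK0.le).neg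
  -- zpow values
  have key : ∀ x : ℝ, 0 < x → x^(N-1) * x ^ (1 - (N:ℤ)) = 1 := by
    intro x hx
    have : (x:ℝ)^(N-1) = x ^ ((N:ℤ)-1) := by
      rw [← zpow_natCast]; congr 1; omega
    rw [this, ← zpow_add₀ hx.ne']
    norm_num
  have hgr : g r = 0 := by
    have h1 : K * r ^ (1 - (N:ℤ)) = R^(N-1) * (a*r + R) := by
      rw [hK]; linear_combination (R^(N-1)*(a*r+R)) * key r hr
    have hRN : R^(N-1) * R = R^N := by
      rw [← pow_succ]; congr 1; omega
    have hrN_ : r^(N-1) * r = r^N := by rw [← pow_succ]; congr 1; omega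
    simp only [hg, smul_eq_mul, h1, hc, hb]
    linear_combination hrN_ - hRN
  have hgR : 0 ≤ g R := by
    have h1 : K * R ^ (1 - (N:ℤ)) = r^(N-1) * (a*r + R) := by
      rw [hK]; linear_combination (r^(N-1)*(a*r+R)) * key R hR
    have hRN : R^(N-1) * R = R^N := by rw [← pow_succ]; congr 1; omega
    have hrN : r^(N-1) * r = r^N := by rw [← pow_succ]; congr 1; omega
    have : g R = (a+1) * b := by
      simp only [hg, smul_eq_mul, h1, hc, hb]; linear_combination -a*hrN + a*hRN
    rw [this]
    have : 0 ≤ a + 1 := by linarith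
    positivity
  have hgpos : ∀ s ∈ Set.Icc r R, 0 ≤ g s := by
    intro s hs
    have hmem : s ∈ segment ℝ r R := by rwa [segment_eq_Icc hrR.le]
    have := hconc.ge_on_segment (Set.left_mem_Icc.mpr hrR.le)
      (Set.right_mem_Icc.mpr hrR.le) hmem
    calc (0:ℝ) ≤ min (g r) (g R) := le_min (le_of_eq hgr.symm) hgR
      _ ≤ g s := this
  intro s hs
  have hs0 : 0 < s := lt_of_lt_of_le hr hs.1
  have hgs := hgpos s hs
  have hgs' : g s = c*s + b - K * s ^ (1 - (N:ℤ)) := by simp [hg, smul_eq_mul]; ring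
  constructor
  · have : rho5 N r R a s + 1 = g s / b := by
      rw [hgs', rho5, ← hc, ← hb, ← hK]
      field_simp
      ring
    nlinarith [div_nonneg hgs hb0.le, this]
  · have hpow : s^N = s^(N-1) * s := by rw [← pow_succ]; congr 1; omega
    have hKs : s^(N-1) * (K * s ^ (1 - (N:ℤ))) = K := by
      rw [← mul_assoc, mul_comm (s^(N-1)) K, mul_assoc, key s hs0, mul_one]
    have hsp : 0 < s^(N-1) := pow_pos hs0 _
    have : 0 ≤ s^(N-1) * g s := mul_nonneg hsp.le hgs
    rw [hgs'] at this
    calc (0:ℝ) ≤ s^(N-1) * (c*s + b - K * s ^ (1 - (N:ℤ))) := this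
      _ = c * s^N + b * s^(N-1) - K := by rw [mul_sub, mul_add, hKs, hpow]; ring
      _ = c*s^N + b*s^(N-1) - K := by ring
end

section
/- The function t(r) = (128 − 109·2^{1/4}(1−r)^{1/4} − 32 r − 12 r²)/(84 (1−r)^{1/4} r) is strictly increasing on [1/2, 1), satisfies t(1/2) = 0, and t(r) → +∞ as r → 1⁻. Consequently, for every t₀ ≥ 0 there exists a unique r ∈ [1/2, 1) with t(r) = t₀. -/
open Real Filter

/-- t(r) = (128 - 109·2^{1/4}(1-r)^{1/4} - 32r - 12r²)/(84(1-r)^{1/4} r). -/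
noncomputable def tFun (r : ℝ) : ℝ :=
  (128 - 109 * 2 ^ ((1:ℝ)/4) * (1 - r) ^ ((1:ℝ)/4) - 32*r - 12*r^2) /
    (84 * (1 - r) ^ ((1:ℝ)/4) * r)

lemma key_ineq (r : ℝ) (h1 : 1/2 ≤ r) (h2 : r < 1) :
    0 < 109 * 2 ^ ((1:ℝ)/4) * (1 - r) ^ ((1:ℝ)/4) * (1-r) +
      (9*r^3 - 20*r^2 + 160*r - 128) := by
  have hr0 : (0:ℝ) < 1 - r := by linarith
  set x : ℝ := 2*(1-r) with hx
  have hx0 : 0 < x := by positivity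
  have hx1 : x ≤ 1 := by simp only [hx]; linarith
  have hmul : (2:ℝ) ^ ((1:ℝ)/4) * (1 - r) ^ ((1:ℝ)/4) = x ^ ((1:ℝ)/4) := by
    rw [hx, Real.mul_rpow (by norm_num) hr0.le]
  have hsq : Real.sqrt x ≤ x ^ ((1:ℝ)/4) := by
    rw [Real.sqrt_eq_rpow]
    exact Real.rpow_le_rpow_of_exponent_ge hx0 hx1 (by norm_num)
  have hs2 : 2*x ≤ Real.sqrt x * (1+x) := by
    nlinarith [Real.sq_sqrt hx0.le, Real.sqrt_nonneg x,
      mul_nonneg (Real.sqrt_nonneg x) (sq_nonneg (Real.sqrt x - 1))]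
  have h1x : (0:ℝ) < 1 + x := by linarith
  have hlb : 2*x/(1+x) ≤ x ^ ((1:ℝ)/4) := by
    rw [div_le_iff₀ h1x]
    calc 2*x ≤ Real.sqrt x * (1+x) := hs2
    _ ≤ x ^ ((1:ℝ)/4) * (1+x) := by nlinarith
  have hq : 0 < 436*(1-r)^2 + (9*r^3 - 20*r^2 + 160*r - 128)*(3-2*r) := by
    nlinarith [sq_nonneg (r - 1/2), sq_nonneg (1-r), sq_nonneg (r-2/3),
      mul_pos (sub_pos.2 h2) (sub_pos.2 h2), sq_nonneg ((r-1/2)*(1-r)), sq_nonneg (r*r - r)]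
  have h3 : (0:ℝ) < 3 - 2*r := by linarith
  have key : 0 < 109 * (2*x/(1+x)) * (1-r) + (9*r^3 - 20*r^2 + 160*r - 128) := by
    have e1 : (1:ℝ) + x = 3 - 2*r := by rw [hx]; ring
    have e2 : 109 * (2*x/(3-2*r)) * (1-r) + (9*r^3 - 20*r^2 + 160*r - 128)
        = (436*(1-r)^2 + (9*r^3 - 20*r^2 + 160*r - 128)*(3-2*r))/(3-2*r) := by
      rw [hx]; field_simp; ring
    rw [e1, e2]
    exact div_pos hq h3
  have e3 : 109 * 2 ^ ((1:ℝ)/4) * (1 - r) ^ ((1:ℝ)/4) = 109 * x ^ ((1:ℝ)/4) := by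
    rw [mul_assoc, hmul]
  rw [e3]
  have : 109 * (2*x/(1+x)) * (1-r) ≤ 109 * x ^ ((1:ℝ)/4) * (1-r) := by
    apply mul_le_mul_of_nonneg_right _ hr0.le
    exact mul_le_mul_of_nonneg_left hlb (by norm_num)
  linarith

lemma tFun_deriv_pos (r : ℝ) (h1 : 1/2 ≤ r) (h2 : r < 1) :
    ∃ d, HasDerivAt tFun d r ∧ 0 < d := by
  have hr0 : (0:ℝ) < 1 - r := by linarith
  have hrpos : (0:ℝ) < r := by linarith
  set c : ℝ := 109 * 2 ^ ((1:ℝ)/4) with hc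
  set w : ℝ := (1 - r) ^ ((1:ℝ)/4) with hwdef
  have hw0 : 0 < w := Real.rpow_pos_of_pos hr0 _
  have hwd : HasDerivAt (fun s : ℝ => (1 - s) ^ ((1:ℝ)/4)) (-(1/4) * w / (1-r)) r := by
    have h0 : HasDerivAt (fun s : ℝ => 1 - s) (-1) r := by
      simpa using (hasDerivAt_id r).const_sub 1
    have h := h0.rpow_const (p := (1:ℝ)/4) (Or.inl (ne_of_gt hr0))
    convert h using 1
    rw [Real.rpow_sub hr0, Real.rpow_one]
    field_simp [hwdef]
    rw [hwdef]
  have hsq : HasDerivAt (fun s : ℝ => s^2) (2*r) r := by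
    simpa using hasDerivAt_pow 2 r
  have hN : HasDerivAt (fun s : ℝ => 128 - c * (1 - s) ^ ((1:ℝ)/4) - 32*s - 12*s^2)
      (-(c * (-(1/4) * w / (1-r))) - 32 - 24*r) r := by
    have h := (((hwd.const_mul c).const_sub 128).sub
      ((hasDerivAt_id r).const_mul 32)).sub (hsq.const_mul 12)
    exact h.congr_deriv (by ring)
  have hD : HasDerivAt (fun s : ℝ => 84 * (1 - s) ^ ((1:ℝ)/4) * s)
      (84 * (-(1/4) * w / (1-r)) * r + 84 * w * 1) r := by
    exact (hwd.const_mul 84).mul (hasDerivAt_id r)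
  have hDne : 84 * (1 - r) ^ ((1:ℝ)/4) * r ≠ 0 := by positivity
  have hdiv := hN.div hD hDne
  refine ⟨_, hdiv, ?_⟩
  apply div_pos
  · have hkey := key_ineq r h1 h2
    have hrw : (-(c * (-(1/4) * w / (1-r))) - 32 - 24*r) * (84 * (1 - r) ^ ((1:ℝ)/4) * r)
        - (128 - c * (1 - r) ^ ((1:ℝ)/4) - 32*r - 12*r^2) * (84 * (-(1/4) * w / (1-r)) * r + 84 * w * 1)
        = 84 * w * (c * w * (1-r) + (9*r^3 - 20*r^2 + 160*r - 128)) / (1-r) := by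
      rw [← hwdef]
      field_simp
      ring
    rw [hrw]
    apply div_pos _ hr0
    apply mul_pos (by positivity)
    rw [hc, hwdef]
    linarith [hkey]
  · positivity

lemma tFun_contOn : ContinuousOn tFun (Set.Ico (1/2 : ℝ) 1) := by
  intro r hr
  obtain ⟨h1, h2⟩ := hr
  have hr0 : (0:ℝ) < 1 - r := by linarith
  have hrpos : (0:ℝ) < r := by linarith
  have hwc : ContinuousAt (fun s : ℝ => (1 - s) ^ ((1:ℝ)/4)) r := by
    exact ContinuousAt.comp
      (Real.continuousAt_rpow_const _ _ (Or.inr (by norm_num)))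
      ((continuous_const.sub continuous_id).continuousAt)
  have hDne : 84 * (1 - r) ^ ((1:ℝ)/4) * r ≠ 0 := by positivity
  apply ContinuousAt.continuousWithinAt
  exact ContinuousAt.div
    (((continuousAt_const.sub (hwc.const_mul _)).sub
      ((continuous_const.mul continuous_id).continuousAt)).sub
      ((continuous_const.mul (continuous_pow 2)).continuousAt))
    ((hwc.const_mul 84).mul continuousAt_id) hDne

lemma tFun_half : tFun (1/2) = 0 := by
  have h : (2:ℝ) ^ ((1:ℝ)/4) * ((1:ℝ) - 1/2) ^ ((1:ℝ)/4) = 1 := by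
    rw [← Real.mul_rpow (by norm_num) (by norm_num)]
    norm_num
  unfold tFun
  rw [mul_assoc, h]
  norm_num

lemma tFun_tendsto : Tendsto tFun (nhdsWithin 1 (Set.Iio 1)) atTop := by
  have hwc : ContinuousAt (fun s : ℝ => (1 - s) ^ ((1:ℝ)/4)) 1 := by
    exact ContinuousAt.comp
      (Real.continuousAt_rpow_const _ _ (Or.inr (by norm_num)))
      ((continuous_const.sub continuous_id).continuousAt)
  have hw1 : ((1:ℝ) - 1) ^ ((1:ℝ)/4) = 0 := by
    norm_num
  have hNlim : Tendsto (fun r : ℝ => 128 - 109 * 2 ^ ((1:ℝ)/4) * (1 - r) ^ ((1:ℝ)/4) - 32*r - 12*r^2)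
      (nhdsWithin 1 (Set.Iio 1)) (nhds 84) := by
    have hc : ContinuousAt (fun r : ℝ => 128 - 109 * 2 ^ ((1:ℝ)/4) * (1 - r) ^ ((1:ℝ)/4) - 32*r - 12*r^2) 1 :=
      ((continuousAt_const.sub (hwc.const_mul _)).sub
        ((continuous_const.mul continuous_id).continuousAt)).sub
        ((continuous_const.mul (continuous_pow 2)).continuousAt)
    have h := hc.tendsto.mono_left
      (nhdsWithin_le_nhds : nhdsWithin (1:ℝ) (Set.Iio 1) ≤ nhds 1)
    convert h using 2
    rw [show (1:ℝ)-1 = 0 by norm_num, Real.zero_rpow (by norm_num : (1:ℝ)/4 ≠ 0)]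
    norm_num
  have hDlim : Tendsto (fun r : ℝ => 84 * (1 - r) ^ ((1:ℝ)/4) * r)
      (nhdsWithin 1 (Set.Iio 1)) (nhdsWithin 0 (Set.Ioi 0)) := by
    apply tendsto_nhdsWithin_of_tendsto_nhds_of_eventually_within
    · have hc : ContinuousAt (fun r : ℝ => 84 * (1 - r) ^ ((1:ℝ)/4) * r) 1 :=
        (hwc.const_mul 84).mul continuousAt_id
      have := hc.tendsto
      simp only [hw1] at this
      have h0 : (84 : ℝ) * 0 * 1 = 0 := by norm_num
      rw [h0] at this
      exact this.mono_left nhdsWithin_le_nhds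
    · have hIoo : Set.Ioo (1/2 : ℝ) 1 ∈ nhdsWithin (1:ℝ) (Set.Iio 1) :=
        Ioo_mem_nhdsLT_of_mem (by constructor <;> norm_num)
      filter_upwards [hIoo] with r hr
      have hr0 : (0:ℝ) < 1 - r := by linarith [hr.2]
      have hrpos : (0:ℝ) < r := by linarith [hr.1]
      have : (0:ℝ) < 84 * (1 - r) ^ ((1:ℝ)/4) * r := by positivity
      exact this
  have hinv : Tendsto (fun r : ℝ => (84 * (1 - r) ^ ((1:ℝ)/4) * r)⁻¹)
      (nhdsWithin 1 (Set.Iio 1)) atTop :=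
    tendsto_inv_nhdsGT_zero.comp hDlim
  have := Filter.Tendsto.pos_mul_atTop (by norm_num : (0:ℝ) < 84) hNlim hinv
  exact this.congr (fun r => (div_eq_mul_inv _ _).symm)

/-- t is strictly increasing on [1/2,1), t(1/2) = 0, t(r) → +∞ as
r → 1⁻, and for every t₀ ≥ 0 there is a unique r ∈ [1/2,1) with t(r) = t₀. -/
theorem stmt9 :
    StrictMonoOn tFun (Set.Ico (1/2 : ℝ) 1) ∧
    tFun (1/2) = 0 ∧
    Tendsto tFun (nhdsWithin 1 (Set.Iio 1)) atTop ∧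
    ∀ t₀ : ℝ, 0 ≤ t₀ → ∃! r : ℝ, r ∈ Set.Ico (1/2:ℝ) 1 ∧ tFun r = t₀ := by
  have hmono : StrictMonoOn tFun (Set.Ico (1/2 : ℝ) 1) := by
    apply strictMonoOn_of_deriv_pos (convex_Ico _ _) tFun_contOn
    intro x hx
    rw [interior_Ico] at hx
    obtain ⟨d, hd, hdpos⟩ := tFun_deriv_pos x hx.1.le hx.2
    rw [hd.deriv]
    exact hdpos
  refine ⟨hmono, tFun_half, tFun_tendsto, ?_⟩
  intro t₀ ht₀
  -- find r' with tFun r' ≥ t₀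
  have hev : ∀ᶠ r in nhdsWithin (1:ℝ) (Set.Iio 1), t₀ ≤ tFun r ∧ r ∈ Set.Ioo (1/2:ℝ) 1 := by
    filter_upwards [tFun_tendsto.eventually (eventually_ge_atTop t₀),
      Ioo_mem_nhdsLT_of_mem (by constructor <;> norm_num : (1:ℝ) ∈ Set.Ioc (1/2:ℝ) 1)]
      with r h1 h2
    exact ⟨h1, h2⟩
  obtain ⟨r', hr'1, hr'2⟩ := hev.exists
  have hsub : Set.Icc (1/2 : ℝ) r' ⊆ Set.Ico (1/2:ℝ) 1 := fun y hy =>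
    ⟨hy.1, lt_of_le_of_lt hy.2 hr'2.2⟩
  have hIVT := intermediate_value_Icc (le_of_lt hr'2.1) (tFun_contOn.mono hsub)
  have hmem : t₀ ∈ Set.Icc (tFun (1/2)) (tFun r') := by
    rw [tFun_half]
    exact ⟨ht₀, hr'1⟩
  obtain ⟨r, hrIcc, hrval⟩ := hIVT hmem
  refine ⟨r, ⟨hsub hrIcc, hrval⟩, ?_⟩
  rintro y ⟨hy, hyval⟩
  exact hmono.injOn hy (hsub hrIcc) (by rw [hyval, hrval])
end

section
/- Let N ≥ 2, 0 < r₀ < r. The function ρ(s) = (r^{N−1} − r₀^{N−1}) s/(r^N − r₀^N) + (r − r₀) r₀^{N−1} r^{N−1}/((r^N − r₀^N) s^{N−1}) satisfies ρ(r₀) = 1 and ρ(r) = 1, solves ρ' + (N−1)ρ/s = N(r^{N−1} − r₀^{N−1})/(r^N − r₀^N) on (0,∞), and obeys 0 < ρ(s) ≤ 1 for all s ∈ [r₀, r]. -/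
/-- ρ(s) = (r^{N-1}-r₀^{N-1})s/(r^N-r₀^N) + (r-r₀)r₀^{N-1}r^{N-1}/((r^N-r₀^N)s^{N-1}). -/
noncomputable def rho11 (N : ℕ) (r₀ r : ℝ) (s : ℝ) : ℝ :=
  (r^(N-1) - r₀^(N-1)) * s / (r^N - r₀^N) +
    (r - r₀) * r₀^(N-1) * r^(N-1) / (r^N - r₀^N) * s ^ (1 - (N:ℤ))

/-- for N ≥ 2, 0 < r₀ < r, ρ(r₀) = ρ(r) = 1, ρ solves
ρ' + (N-1)ρ/s = N(r^{N-1}-r₀^{N-1})/(r^N-r₀^N) on (0,∞), and 0 < ρ ≤ 1 on [r₀,r]. -/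
theorem stmt11 (N : ℕ) (hN : 2 ≤ N) (r₀ r : ℝ) (h0 : 0 < r₀) (hr : r₀ < r) :
    rho11 N r₀ r r₀ = 1 ∧ rho11 N r₀ r r = 1 ∧
    (∀ s : ℝ, 0 < s → HasDerivAt (rho11 N r₀ r)
      ((N:ℝ) * (r^(N-1) - r₀^(N-1)) / (r^N - r₀^N) - ((N:ℝ)-1) * rho11 N r₀ r s / s) s) ∧
    ∀ s ∈ Set.Icc r₀ r, 0 < rho11 N r₀ r s ∧ rho11 N r₀ r s ≤ 1 := by
  obtain ⟨n, rfl⟩ : ∃ n, N = n + 2 := ⟨N - 2, by omega⟩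
  have hr0 : (0:ℝ) < r := h0.trans hr
  have hD : (0:ℝ) < r ^ (n+2) - r₀ ^ (n+2) :=
    sub_pos.mpr (pow_lt_pow_left₀ hr h0.le (by omega))
  have hA : (0:ℝ) < (r ^ (n+1) - r₀ ^ (n+1)) / (r ^ (n+2) - r₀ ^ (n+2)) :=
    div_pos (sub_pos.mpr (pow_lt_pow_left₀ hr h0.le (by omega))) hD
  have hC : (0:ℝ) < (r - r₀) * r₀ ^ (n+1) * r ^ (n+1) / (r ^ (n+2) - r₀ ^ (n+2)) :=
    div_pos (mul_pos (mul_pos (sub_pos.mpr hr) (by positivity)) (by positivity)) hD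
  have hexp : (1 - ((n+2 : ℕ) : ℤ)) = -((n+1 : ℕ) : ℤ) := by push_cast; ring
  have key : ∀ s : ℝ, rho11 (n+2) r₀ r s =
      (r ^ (n+1) - r₀ ^ (n+1)) / (r ^ (n+2) - r₀ ^ (n+2)) * s +
      (r - r₀) * r₀ ^ (n+1) * r ^ (n+1) / (r ^ (n+2) - r₀ ^ (n+2)) * (s ^ (n+1))⁻¹ := by
    intro s
    simp only [rho11, show n + 2 - 1 = n + 1 from rfl, hexp, zpow_neg, zpow_natCast]
    ring
  have e1 : rho11 (n+2) r₀ r r₀ = 1 := by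
    rw [key]
    field_simp
    ring
  have e2 : rho11 (n+2) r₀ r r = 1 := by
    rw [key]
    field_simp
    ring
  refine ⟨e1, e2, ?_, ?_⟩
  · -- derivative
    intro s hs
    have hsne : s ≠ 0 := hs.ne'
    have h1 := hasDerivAt_zpow (-((n+1:ℕ):ℤ)) s (Or.inl hsne)
    have hd := ((hasDerivAt_id s).const_mul
        ((r ^ (n+1) - r₀ ^ (n+1)) / (r ^ (n+2) - r₀ ^ (n+2)))).add
        (h1.const_mul ((r - r₀) * r₀ ^ (n+1) * r ^ (n+1) / (r ^ (n+2) - r₀ ^ (n+2))))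
    have hd' := hd.congr_of_eventuallyEq (f₁ := rho11 (n+2) r₀ r) (by
      filter_upwards with x
      rw [key x]; simp only [Pi.add_apply, id, zpow_neg, zpow_natCast])
    refine hd'.congr_deriv (Eq.symm ?_)
    rw [key s]
    have h2 : s ^ (-((n+1:ℕ):ℤ) - 1) = (s ^ (n+2))⁻¹ := by
      rw [show (-((n+1:ℕ):ℤ) - 1) = -((n+2:ℕ):ℤ) by push_cast; ring, zpow_neg, zpow_natCast]
    rw [h2]
    have hs1 : s ^ (n+1) ≠ 0 := pow_ne_zero _ hsne
    have hs2 : s ^ (n+2) ≠ 0 := pow_ne_zero _ hsne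
    push_cast
    field_simp
    ring
  · -- bounds
    intro s hsmem
    obtain ⟨hs1, hs2⟩ := hsmem
    have hs : 0 < s := h0.trans_le hs1
    constructor
    · rw [key]
      positivity
    · -- convexity
      have hIcc : Set.Icc r₀ r ⊆ Set.Ioi (0:ℝ) := fun x hx => h0.trans_le hx.1
      have hconv : ConvexOn ℝ (Set.Ioi (0:ℝ)) (rho11 (n+2) r₀ r) := by
        have hlin : ConvexOn ℝ (Set.Ioi (0:ℝ))
            (fun s : ℝ => (r ^ (n+1) - r₀ ^ (n+1)) / (r ^ (n+2) - r₀ ^ (n+2)) * s) :=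
          (convexOn_id (convex_Ioi 0)).smul hA.le
        have hz : ConvexOn ℝ (Set.Ioi (0:ℝ))
            (fun s : ℝ => (r - r₀) * r₀ ^ (n+1) * r ^ (n+1) / (r ^ (n+2) - r₀ ^ (n+2)) *
              s ^ (-((n+1:ℕ):ℤ))) :=
          (convexOn_zpow _).smul hC.le
        have := hlin.add hz
        refine this.congr ?_
        intro x _
        simp only [Pi.add_apply, zpow_neg, zpow_natCast]
        exact (key x).symm
      have hmem₀ : r₀ ∈ Set.Ioi (0:ℝ) := h0
      have hmemr : r ∈ Set.Ioi (0:ℝ) := hr0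
      have hseg : s ∈ segment ℝ r₀ r := by
        rw [segment_eq_Icc hr.le]; exact ⟨hs1, hs2⟩
      have := hconv.le_on_segment hmem₀ hmemr hseg
      rwa [e1, e2, max_self] at this
end
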